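/- arXiv:2503.21487 — 2 statements merged into one kernel-verified Lean document; each statement's English description precedes it below -/
import Mathlib

section
/- Let k ≥ 2 and, for each i = 2,…,k, let A_i be an i-th order 2n-dimensional cubical tensor that is a Hamiltonian cubical tensor (equivalently, J A_i is supersymmetric). Then there exist supersymmetric tensors B_i (of order i and dimension 2n, for i = 2,…,k) such that, setting H(x) = ∑_{i=2}^k B_i x^i, the polynomial vector field satisfies ∑_{i=2}^k A_i x^{i−1} = J ∇H(x) for all x ∈ ℝ^{2n}; that is, the polynomial system ẋ = ∑_{i=2}^k A_i x^{i−1} is a Hamiltonian system with polynomial Hamiltonian H. -/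
open Finset Matrix

/-- A `k`-th order cubical tensor with index set `ι` (entries `A i₁ … i_k ∈ ℝ`,
encoded as a function on index tuples). -/
abbrev Tensor (k : ℕ) (ι : Type) : Type := (Fin k → ι) → ℝ

/-- The transpose `A^{⊤_σ}` of a tensor `A` associated with a permutation `σ`:
`(A^{⊤_σ})_{i_{σ(1)} … i_{σ(k)}} = A_{i_1 … i_k}`. -/
def tTranspose {k : ℕ} {ι : Type} (σ : Equiv.Perm (Fin k)) (A : Tensor k ι) : Tensor k ι :=
  fun i => A (i ∘ σ)

/-- A cubical tensor is supersymmetric if its entries are invariant under any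
permutation of the indices. -/
def IsSupersymmetric {k : ℕ} {ι : Type} (A : Tensor k ι) : Prop :=
  ∀ σ : Equiv.Perm (Fin k), tTranspose σ A = A

/-- The scalar `A x^k = ∑_{i_1,…,i_k} A_{i_1…i_k} x_{i_1} ⋯ x_{i_k}`. -/
def tPow {k : ℕ} {ι : Type} [Fintype ι] (A : Tensor k ι) (x : ι → ℝ) : ℝ :=
  ∑ i : Fin k → ι, A i * ∏ t, x (i t)

/-- The vector `A x^{k-1}` (here the tensor has order `k+1`):
`(A x^k)_a = ∑_{i_2,…,i_{k+1}} A_{a i_2 … i_{k+1}} x_{i_2} ⋯ x_{i_{k+1}}`. -/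
def tVec {k : ℕ} {ι : Type} [Fintype ι] (A : Tensor (k + 1) ι) (x : ι → ℝ) : ι → ℝ :=
  fun a => ∑ i : Fin k → ι, A (Fin.cons a i) * ∏ t, x (i t)

/-- The matrix `A x^{k-2}` (here the tensor has order `k+2`):
`(A x^k)_{a b} = ∑_{i_3,…,i_{k+2}} A_{a b i_3 … i_{k+2}} x_{i_3} ⋯ x_{i_{k+2}}`. -/
def tMat {k : ℕ} {ι : Type} [Fintype ι] (A : Tensor (k + 2) ι) (x : ι → ℝ) : Matrix ι ι ℝ :=
  Matrix.of fun a b => ∑ i : Fin k → ι, A (Fin.cons a (Fin.cons b i)) * ∏ t, x (i t)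

/-- The matrix-tensor product `(RA)_{i_1 i_2 … i_k} = ∑_j R_{i_1 j} A_{j i_2 … i_k}`. -/
def matMulT {k : ℕ} {ι : Type} [Fintype ι] (R : Matrix ι ι ℝ) (A : Tensor (k + 1) ι) :
    Tensor (k + 1) ι :=
  fun i => ∑ j : ι, R (i 0) j * A (Function.update i 0 j)

/-- The standard symplectic matrix `J = [[0, Iₙ], [-Iₙ, 0]]` of size `2n × 2n`,
with `ℝ^{2n}` realized as `Fin n ⊕ Fin n → ℝ`. -/
def sympJ (n : ℕ) : Matrix (Fin n ⊕ Fin n) (Fin n ⊕ Fin n) ℝ :=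
  Matrix.fromBlocks 0 1 (-1) 0

/-- A cubical tensor `A` of even dimension is a Hamiltonian cubical tensor if
`(Jᵀ A)^{⊤_σ} + J A = 0` for every permutation `σ`. -/
def IsHamiltonianTensor {k n : ℕ} (A : Tensor (k + 1) (Fin n ⊕ Fin n)) : Prop :=
  ∀ σ : Equiv.Perm (Fin (k + 1)),
    tTranspose σ (matMulT (sympJ n)ᵀ A) + matMulT (sympJ n) A = 0

section Lemmas

variable {ι : Type} [Fintype ι] [DecidableEq ι]

lemma erase_zero_eq (K : ℕ) :
    (Finset.univ : Finset (Fin (K + 1))).erase 0 =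
      Finset.univ.map ⟨Fin.succ, Fin.succ_injective _⟩ := by
  ext s
  simp [Fin.exists_succ_eq]

lemma prod_erase_zero {K : ℕ} (f : Fin (K + 1) → ℝ) :
    ∏ s ∈ (Finset.univ : Finset (Fin (K + 1))).erase 0, f s = ∏ t : Fin K, f t.succ := by
  rw [erase_zero_eq, Finset.prod_map]
  rfl

lemma swap_term_eq {K : ℕ} (S : Tensor (K + 1) ι) (hS : IsSupersymmetric S)
    (x v : ι → ℝ) (t : Fin (K + 1)) :
    ∑ i : Fin (K + 1) → ι, S i * ((∏ s ∈ Finset.univ.erase t, x (i s)) * v (i t)) =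
      ∑ i : Fin (K + 1) → ι, S i * ((∏ s ∈ Finset.univ.erase 0, x (i s)) * v (i 0)) := by
  have e : (Fin (K + 1) → ι) ≃ (Fin (K + 1) → ι) :=
    (Equiv.swap 0 t).arrowCongr (Equiv.refl ι)
  rw [← Equiv.sum_comp ((Equiv.swap 0 t).arrowCongr (Equiv.refl ι))
    (fun i => S i * ((∏ s ∈ Finset.univ.erase t, x (i s)) * v (i t)))]
  refine Finset.sum_congr rfl fun i _ => ?_
  have hie : ∀ s, ((Equiv.swap 0 t).arrowCongr (Equiv.refl ι)) i s = i (Equiv.swap 0 t s) := by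
    intro s; simp [Equiv.arrowCongr]
  have h1 : (S fun s => i (Equiv.swap 0 t s)) = S i := by
    have := congrFun (hS (Equiv.swap 0 t)) i
    simpa [tTranspose, Function.comp_def] using this
  rw [funext hie, h1]
  congr 1
  have h2 : Equiv.swap 0 t t = 0 := Equiv.swap_apply_right 0 t
  simp only [h2]
  congr 1
  refine Finset.prod_bij' (fun s _ => Equiv.swap 0 t s) (fun s _ => Equiv.swap 0 t s)
    ?_ ?_ ?_ ?_ ?_
  · intro a ha
    simp only [Finset.mem_erase, Finset.mem_univ, and_true] at ha ⊢
    intro h; apply ha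
    have := congrArg (Equiv.swap 0 t) h
    simpa using this
  · intro a ha
    simp only [Finset.mem_erase, Finset.mem_univ, and_true] at ha ⊢
    intro h; apply ha
    have := congrArg (Equiv.swap 0 t) h
    simpa using this
  · intro a _; simp
  · intro a _; simp
  · intro a _; rfl

end Lemmas

section Grad

variable {ι : Type} [Fintype ι] [DecidableEq ι]

lemma hasGradientAt_tPow {K : ℕ} (S : Tensor (K + 1) ι) (hS : IsSupersymmetric S)
    (x : EuclideanSpace ℝ ι) :
    HasGradientAt (fun w : EuclideanSpace ℝ ι => tPow S w)
      (WithLp.toLp 2 (((K : ℝ) + 1) • tVec S x : ι → ℝ)) x := by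
  have hF : HasFDerivAt (fun w : EuclideanSpace ℝ ι => tPow S w)
      (∑ i : Fin (K + 1) → ι, S i •
        (∑ t : Fin (K + 1), (∏ s ∈ Finset.univ.erase t, x (i s)) •
          (EuclideanSpace.proj (i t) : EuclideanSpace ℝ ι →L[ℝ] ℝ))) x := by
    apply HasFDerivAt.fun_sum
    intro i _
    exact (HasFDerivAt.finset_prod
      (fun t _ => (EuclideanSpace.proj (i t) : EuclideanSpace ℝ ι →L[ℝ] ℝ).hasFDerivAt)).const_mul
      (S i)
  rw [hasGradientAt_iff_hasFDerivAt]
  refine hF.congr_fderiv (Eq.symm ?_)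
  ext v
  simp only [InnerProductSpace.toDual_apply_apply, ContinuousLinearMap.sum_apply,
    ContinuousLinearMap.smul_apply, PiLp.proj_apply, smul_eq_mul,
    ContinuousLinearMap.coe_sum']
  rw [PiLp.inner_apply]
  simp only [RCLike.inner_apply, starRingEnd_apply, star_trivial]
  -- LHS: ∑ a, ((K+1) • tVec S x) a * v a
  -- RHS: ∑ i, S i * ∑ t, (∏ s ∈ erase t, x (i s)) * v (i t)
  have rhs_eq : ∑ i : Fin (K + 1) → ι, S i *
        ∑ t : Fin (K + 1), (∏ s ∈ Finset.univ.erase t, x (i s)) * v (i t)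
      = ((K : ℝ) + 1) * ∑ i : Fin (K + 1) → ι,
          S i * ((∏ s ∈ Finset.univ.erase 0, x (i s)) * v (i 0)) := by
    calc ∑ i : Fin (K + 1) → ι, S i *
          ∑ t : Fin (K + 1), (∏ s ∈ Finset.univ.erase t, x (i s)) * v (i t)
        = ∑ t : Fin (K + 1), ∑ i : Fin (K + 1) → ι,
            S i * ((∏ s ∈ Finset.univ.erase t, x (i s)) * v (i t)) := by
          rw [Finset.sum_comm]
          exact Finset.sum_congr rfl fun i _ => by rw [Finset.mul_sum]
      _ = ∑ _t : Fin (K + 1), ∑ i : Fin (K + 1) → ι,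
            S i * ((∏ s ∈ Finset.univ.erase 0, x (i s)) * v (i 0)) :=
          Finset.sum_congr rfl fun t _ => swap_term_eq S hS x v t
      _ = ((K : ℝ) + 1) * ∑ i : Fin (K + 1) → ι,
            S i * ((∏ s ∈ Finset.univ.erase 0, x (i s)) * v (i 0)) := by
          rw [Finset.sum_const, Finset.card_univ, Fintype.card_fin, nsmul_eq_mul]
          push_cast; ring
  rw [rhs_eq]
  have cons_eq : ∑ i : Fin (K + 1) → ι,
        S i * ((∏ s ∈ Finset.univ.erase 0, x (i s)) * v (i 0))
      = ∑ a : ι, tVec S x a * v a := by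
    rw [← Equiv.sum_comp (Fin.consEquiv (fun _ : Fin (K + 1) => ι))
      (fun i => S i * ((∏ s ∈ Finset.univ.erase 0, x (i s)) * v (i 0)))]
    rw [Fintype.sum_prod_type]
    refine Finset.sum_congr rfl fun a _ => ?_
    rw [tVec, Finset.sum_mul]
    refine Finset.sum_congr rfl fun j _ => ?_
    show S (Fin.cons a j) * ((∏ s ∈ Finset.univ.erase 0,
        x ((Fin.cons a j : Fin (K + 1) → ι) s)) * v ((Fin.cons a j : Fin (K + 1) → ι) 0)) =
      (S (Fin.cons a j) * ∏ t : Fin K, x (j t)) * v a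
    rw [prod_erase_zero (fun s : Fin (K + 1) => x ((Fin.cons a j : Fin (K + 1) → ι) s))]
    have h0 : (Fin.cons a j : Fin (K + 1) → ι) 0 = a := rfl
    have hsucc : ∀ t : Fin K, (Fin.cons a j : Fin (K + 1) → ι) t.succ = j t := fun t => rfl
    rw [h0, Finset.prod_congr rfl (fun t _ => congrArg x (hsucc t))]
    ring
  rw [cons_eq, Finset.mul_sum]
  refine Finset.sum_congr rfl fun a _ => ?_
  simp [tVec]
  ring
end Grad

section Alg

variable {ι : Type} [Fintype ι] [DecidableEq ι]

lemma hasGradientAt_finset_sum {F : Type*} [NormedAddCommGroup F] [InnerProductSpace ℝ F]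
    [CompleteSpace F] {κ : Type*} (s : Finset κ) (f : κ → F → ℝ) (g : κ → F) (x : F)
    (h : ∀ i ∈ s, HasGradientAt (f i) (g i) x) :
    HasGradientAt (fun w => ∑ i ∈ s, f i w) (∑ i ∈ s, g i) x := by
  simp only [hasGradientAt_iff_hasFDerivAt] at h ⊢
  have := HasFDerivAt.fun_sum h
  rwa [← map_sum] at this

lemma mulVec_tVec {K : ℕ} (R : Matrix ι ι ℝ) (B : Tensor (K + 1) ι) (x : ι → ℝ) :
    R.mulVec (tVec B x) = tVec (matMulT R B) x := by
  funext a
  show ∑ j, R a j * (∑ i : Fin K → ι, B (Fin.cons j i) * ∏ t, x (i t)) = _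
  simp only [Finset.mul_sum]
  rw [Finset.sum_comm]
  refine Finset.sum_congr rfl fun i _ => ?_
  show _ = (∑ j, R ((Fin.cons a i : Fin (K + 1) → ι) 0) j *
      B (Function.update (Fin.cons a i : Fin (K + 1) → ι) 0 j)) * ∏ t, x (i t)
  rw [Finset.sum_mul]
  refine Finset.sum_congr rfl fun j _ => ?_
  have h1 : (Fin.cons a i : Fin (K + 1) → ι) 0 = a := rfl
  have h2 : Function.update (Fin.cons a i : Fin (K + 1) → ι) 0 j = Fin.cons j i := by
    funext s
    refine Fin.cases ?_ (fun p => ?_) s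
    · simp
    · simp [Function.update, Fin.succ_ne_zero]
  rw [h1, h2]
  ring

lemma matMulT_matMulT {K : ℕ} (R R' : Matrix ι ι ℝ) (B : Tensor (K + 1) ι) :
    matMulT R (matMulT R' B) = matMulT (R * R') B := by
  funext i
  have hupd : ∀ j l : ι, Function.update (Function.update i 0 j) 0 l
      = Function.update i 0 l := by
    intro j l; funext s; by_cases h : s = 0 <;> simp [h]
  calc (∑ j, R (i 0) j * ∑ l, R' (Function.update i 0 j 0) l *
          B (Function.update (Function.update i 0 j) 0 l))
      = ∑ j, ∑ l, R (i 0) j * (R' j l * B (Function.update i 0 l)) := by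
        refine Finset.sum_congr rfl fun j _ => ?_
        rw [Finset.mul_sum]
        refine Finset.sum_congr rfl fun l _ => ?_
        rw [Function.update_self, hupd j l]
    _ = ∑ l, (∑ j, R (i 0) j * R' j l) * B (Function.update i 0 l) := by
        rw [Finset.sum_comm]
        refine Finset.sum_congr rfl fun l _ => ?_
        rw [Finset.sum_mul]
        refine Finset.sum_congr rfl fun j _ => ?_
        ring
    _ = ∑ l, (R * R') (i 0) l * B (Function.update i 0 l) := by
        refine Finset.sum_congr rfl fun l _ => ?_
        rw [Matrix.mul_apply]

lemma matMulT_one {K : ℕ} (B : Tensor (K + 1) ι) : matMulT (1 : Matrix ι ι ℝ) B = B := by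
  funext i
  show ∑ j, (1 : Matrix ι ι ℝ) (i 0) j * B (Function.update i 0 j) = B i
  rw [Finset.sum_eq_single (i 0)]
  · simp [Function.update_eq_self]
  · intro j _ hj; simp [Matrix.one_apply, Ne.symm hj]
  · intro h; exact absurd (Finset.mem_univ _) h

lemma sympJ_mul_transpose (n : ℕ) : sympJ n * (sympJ n)ᵀ = 1 := by
  simp [sympJ, Matrix.fromBlocks_transpose, Matrix.fromBlocks_multiply,
    ← Matrix.fromBlocks_one]

lemma hamiltonian_symm {K n : ℕ} (A : Tensor (K + 1) (Fin n ⊕ Fin n))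
    (h : IsHamiltonianTensor A) : IsSupersymmetric (matMulT (sympJ n)ᵀ A) := by
  intro σ
  have hM : matMulT (sympJ n)ᵀ A = -(matMulT (sympJ n) A) := by
    have h1 := h 1
    have e1 : tTranspose 1 (matMulT (sympJ n)ᵀ A) = matMulT (sympJ n)ᵀ A := rfl
    rw [e1] at h1
    exact eq_neg_of_add_eq_zero_left h1
  have h2 : tTranspose σ (matMulT (sympJ n)ᵀ A) = -(matMulT (sympJ n) A) :=
    eq_neg_of_add_eq_zero_left (h σ)
  rw [h2, ← hM]

end Alg

/-- if all the system tensors `A_i` (of order `i + 2` for `i = 0, …, m`,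
i.e. of orders `2, …, m + 2`, and dimension `2n`) are Hamiltonian cubical tensors, then
the polynomial system `ẋ = ∑ᵢ Aᵢ x^{i+1}` is a Hamiltonian system: there are
supersymmetric tensors `B_i` such that, with `H(x) = ∑ᵢ Bᵢ x^{i+2}`, the vector field
equals `J ∇H(x)` for all `x`. -/
theorem tensor_polynomial_system_is_hamiltonian (n m : ℕ)
    (A : (i : ℕ) → Tensor (i + 2) (Fin n ⊕ Fin n))
    (hA : ∀ i ≤ m, IsHamiltonianTensor (A i)) :
    ∃ B : (i : ℕ) → Tensor (i + 2) (Fin n ⊕ Fin n),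
      (∀ i ≤ m, IsSupersymmetric (B i)) ∧
      ∀ x : EuclideanSpace ℝ (Fin n ⊕ Fin n),
        ∑ i ∈ Finset.range (m + 1), tVec (A i) x =
          (sympJ n).mulVec
            (gradient (fun w : EuclideanSpace ℝ (Fin n ⊕ Fin n) =>
              ∑ i ∈ Finset.range (m + 1), tPow (B i) w) x :
              EuclideanSpace ℝ (Fin n ⊕ Fin n)) := by
  set M : (i : ℕ) → Tensor (i + 2) (Fin n ⊕ Fin n) := fun i => matMulT (sympJ n)ᵀ (A i) with hM
  set B : (i : ℕ) → Tensor (i + 2) (Fin n ⊕ Fin n) := fun i idx => ((i : ℝ) + 2)⁻¹ * M i idx with hB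
  have hMsymm : ∀ i ≤ m, IsSupersymmetric (M i) := fun i hi =>
    hamiltonian_symm (A i) (hA i hi)
  have hBsymm : ∀ i ≤ m, IsSupersymmetric (B i) := by
    intro i hi σ
    funext idx
    exact congrArg (fun r => ((i : ℝ) + 2)⁻¹ * r) (congrFun (hMsymm i hi σ) idx)
  refine ⟨B, hBsymm, fun x => ?_⟩
  have hg : HasGradientAt
      (fun w : EuclideanSpace ℝ (Fin n ⊕ Fin n) => ∑ i ∈ Finset.range (m + 1), tPow (B i) w)
      (∑ i ∈ Finset.range (m + 1),
        WithLp.toLp 2 ((((i + 1 : ℕ) : ℝ) + 1) • tVec (B i) x : (Fin n ⊕ Fin n) → ℝ)) x := by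
    apply hasGradientAt_finset_sum
    intro i hi
    exact hasGradientAt_tPow (B i) (hBsymm i (Nat.lt_succ_iff.mp (Finset.mem_range.mp hi))) x
  rw [hg.gradient]
  have hterm : ∀ i : ℕ, ((((i + 1 : ℕ) : ℝ) + 1) • tVec (B i) x : (Fin n ⊕ Fin n) → ℝ) = tVec (M i) x := by
    intro i
    funext a
    have hne : ((i : ℝ) + 2) ≠ 0 := by positivity
    have hv : tVec (B i) x a = ((i : ℝ) + 2)⁻¹ * tVec (M i) x a := by
      show ∑ j : Fin (i + 1) → (Fin n ⊕ Fin n), (((i : ℝ) + 2)⁻¹ * M i (Fin.cons a j)) * ∏ t, x (j t)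
        = ((i : ℝ) + 2)⁻¹ * ∑ j : Fin (i + 1) → (Fin n ⊕ Fin n), M i (Fin.cons a j) * ∏ t, x (j t)
      rw [Finset.mul_sum]
      exact Finset.sum_congr rfl fun j _ => by ring
    show (((i + 1 : ℕ) : ℝ) + 1) * tVec (B i) x a = tVec (M i) x a
    rw [hv, ← mul_assoc]
    push_cast
    rw [show ((i : ℝ) + 1 + 1) = ((i : ℝ) + 2) by ring, mul_inv_cancel₀ hne, one_mul]
  have hsum : (∑ i ∈ Finset.range (m + 1),
      WithLp.toLp 2 ((((i + 1 : ℕ) : ℝ) + 1) • tVec (B i) x : (Fin n ⊕ Fin n) → ℝ)) =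
      WithLp.toLp 2 (∑ i ∈ Finset.range (m + 1), tVec (M i) x) := by
    rw [WithLp.toLp_sum]
    exact Finset.sum_congr rfl fun i _ => congrArg (WithLp.toLp 2) (hterm i)
  rw [hsum]
  rw [WithLp.ofLp_toLp]
  rw [← Matrix.mulVecLin_apply, map_sum]
  refine Finset.sum_congr rfl fun i _ => ?_
  rw [Matrix.mulVecLin_apply, mulVec_tVec, matMulT_matMulT, sympJ_mul_transpose, matMulT_one]
end

section
/- Let k ≥ 2 and, for each i = 2,…,k, let B_i be a supersymmetric i-th order 2n-dimensional cubical tensor, and consider the Hamiltonian system ẋ = J ∇H(x) with H(x) = ∑_{i=2}^k B_i x^i. Let x* ∈ ℝ^{2n} be an equilibrium, i.e., J ∇H(x*) = 0. If the symmetric 2n×2n matrix ∑_{i=2}^k i(i−1) B_i (x*)^{i−2} is positive definite or negative definite, then x* is a Lyapunov stable equilibrium of this system. -/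
open Finset Matrix

section Helpers

variable {ι : Type} [Fintype ι]

def sTerm (k : ℕ) (A : Tensor k ι) (x h : ι → ℝ) (s : ℕ) : ℝ :=
  ∑ j : Fin k → ι, A j * ∏ t, (if t.val < s then h (j t) else x (j t))

lemma card_filter_val_lt (k s : ℕ) (hs : s ≤ k) :
    ((univ : Finset (Fin k)).filter (fun t => t.val < s)).card = s := by
  have : ((univ : Finset (Fin k)).filter (fun t => t.val < s)).card
      = (univ : Finset (Fin s)).card :=
    Finset.card_bij' (fun t ht => ⟨t.val, (Finset.mem_filter.1 ht).2⟩)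
      (fun u _ => ⟨u.val, u.2.trans_le hs⟩) (by simp) (by simp) (by simp) (by simp)
  simpa using this

lemma exists_perm (k s : ℕ) (S : Finset (Fin k)) (hcard : S.card = s) :
    ∃ σ : Equiv.Perm (Fin k), ∀ t, (σ t).val < s ↔ t ∈ S := by
  classical
  have hsk : s ≤ k := hcard ▸ (le_trans (Finset.card_le_univ S) (by simp))
  have hTcard : ((univ : Finset (Fin k)).filter (fun t => t.val < s)).card = s :=
    card_filter_val_lt k s hsk
  let e₁ : {a : Fin k // a ∈ S} ≃ {a : Fin k // a ∈ (univ : Finset (Fin k)).filter (fun t => t.val < s)} :=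
    Finset.equivOfCardEq (by rw [hcard, hTcard])
  let e₂0 : ((Sᶜ : Finset (Fin k)) : Type) ≃
      (((((univ : Finset (Fin k)).filter (fun t => t.val < s))ᶜ : Finset (Fin k))) : Type) :=
    Finset.equivOfCardEq (by rw [Finset.card_compl, Finset.card_compl, hcard, hTcard])
  let e₂ : {a : Fin k // ¬ a ∈ S} ≃ {a : Fin k // ¬ a ∈ (univ : Finset (Fin k)).filter (fun t => t.val < s)} :=
    ((Equiv.subtypeEquivRight (fun a => Finset.mem_compl)).symm.trans e₂0).trans
      (Equiv.subtypeEquivRight (fun a => Finset.mem_compl))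
  refine ⟨(Equiv.sumCompl (· ∈ S)).symm.trans ((e₁.sumCongr e₂).trans
    (Equiv.sumCompl (· ∈ (univ : Finset (Fin k)).filter (fun t => t.val < s)))), ?_⟩
  intro t
  by_cases ht : t ∈ S
  · simp only [Equiv.trans_apply, Equiv.sumCompl_symm_apply_of_pos ht, Equiv.sumCongr_apply,
      Sum.map_inl, Equiv.sumCompl_apply_inl]
    have := (Finset.mem_filter.1 (e₁ ⟨t, ht⟩).2).2
    exact ⟨fun _ => ht, fun _ => this⟩
  · simp only [Equiv.trans_apply, Equiv.sumCompl_symm_apply_of_neg ht, Equiv.sumCongr_apply,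
      Sum.map_inr, Equiv.sumCompl_apply_inr]
    have := (e₂ ⟨t, ht⟩).2
    simp only [Finset.mem_filter, Finset.mem_univ, true_and] at this
    exact ⟨fun h => absurd h this, fun h => absurd h ht⟩

lemma sum_ite_mem_eq_sTerm {k : ℕ} (A : Tensor k ι) (hA : IsSupersymmetric A) (x h : ι → ℝ)
    (S : Finset (Fin k)) :
    ∑ j : Fin k → ι, A j * ∏ t, (if t ∈ S then h (j t) else x (j t)) =
      sTerm k A x h S.card := by
  classical
  obtain ⟨σ, hσ⟩ := exists_perm k S.card S rfl
  refine Fintype.sum_equiv (Equiv.arrowCongr σ (Equiv.refl ι)) _ _ ?_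
  intro j
  have hAj : A (j ∘ ⇑σ.symm) = A j := by
    have := congrFun (hA σ.symm) j
    simpa [tTranspose] using this
  have hprod : ∏ u, (if u.val < S.card then (j ∘ ⇑σ.symm) u |> h else (j ∘ ⇑σ.symm) u |> x) =
      ∏ t, (if t ∈ S then h (j t) else x (j t)) := by
    rw [← Equiv.prod_comp σ
      (fun u => if u.val < S.card then h ((j ∘ ⇑σ.symm) u) else x ((j ∘ ⇑σ.symm) u))]
    refine Finset.prod_congr rfl fun t _ => ?_
    simp only [Function.comp_apply, Equiv.symm_apply_apply]
    by_cases ht : t ∈ S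
    · rw [if_pos ((hσ t).2 ht), if_pos ht]
    · rw [if_neg (fun hc => ht ((hσ t).1 hc)), if_neg ht]
  rw [← hprod, ← hAj]
  rfl

lemma tPow_add {k : ℕ} (A : Tensor k ι) (hA : IsSupersymmetric A) (x h : ι → ℝ) :
    tPow A (fun a => x a + h a) =
      ∑ s ∈ Finset.range (k + 1), (k.choose s : ℝ) * sTerm k A x h s := by
  classical
  unfold tPow
  have step1 : ∀ j : Fin k → ι, (∏ t, (x (j t) + h (j t))) =
      ∑ S ∈ (univ : Finset (Fin k)).powerset, ∏ t, (if t ∈ S then h (j t) else x (j t)) := by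
    intro j
    rw [show (∏ t, (x (j t) + h (j t))) = ∏ t, (h (j t) + x (j t)) from
      Finset.prod_congr rfl fun t _ => add_comm _ _]
    rw [Finset.prod_add]
    refine Finset.sum_congr rfl fun S _ => ?_
    rw [Finset.prod_ite (fun t => h (j t)) (fun t => x (j t)), Finset.filter_univ_mem,
      Finset.filter_not, Finset.filter_univ_mem]
  calc (∑ j : Fin k → ι, A j * ∏ t, (x (j t) + h (j t)))
      = ∑ S ∈ (univ : Finset (Fin k)).powerset,
          ∑ j : Fin k → ι, A j * ∏ t, (if t ∈ S then h (j t) else x (j t)) := by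
        rw [Finset.sum_comm]
        exact Finset.sum_congr rfl fun j _ => by rw [step1 j, Finset.mul_sum]
    _ = ∑ S ∈ (univ : Finset (Fin k)).powerset, sTerm k A x h S.card := by
        exact Finset.sum_congr rfl fun S _ => sum_ite_mem_eq_sTerm A hA x h S
    _ = ∑ s ∈ Finset.range (k + 1), (k.choose s : ℝ) * sTerm k A x h s := by
        rw [Finset.sum_powerset_apply_card (fun c => sTerm k A x h c)]
        simp [Finset.card_univ, nsmul_eq_mul]

lemma sTerm_zero {k : ℕ} (A : Tensor k ι) (x h : ι → ℝ) : sTerm k A x h 0 = tPow A x := by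
  simp [sTerm, tPow]

lemma sTerm_one {k : ℕ} (A : Tensor (k + 1) ι) (x h : ι → ℝ) :
    sTerm (k + 1) A x h 1 =
      ∑ j : Fin (k + 1) → ι, (A j * ∏ t : Fin k, x (j t.succ)) * h (j 0) := by
  unfold sTerm
  refine Finset.sum_congr rfl fun j _ => ?_
  rw [Fin.prod_univ_succ]
  simp [Fin.val_succ]
  ring

lemma sTerm_two {k : ℕ} (A : Tensor (k + 2) ι) (x h : ι → ℝ) :
    sTerm (k + 2) A x h 2 = h ⬝ᵥ (tMat A x).mulVec h := by
  classical
  have hpt : ∀ p : ι × ι × (Fin k → ι),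
      h p.1 * (h p.2.1 * (A (Fin.cons p.1 (Fin.cons p.2.1 p.2.2)) * ∏ t, x (p.2.2 t))) =
      A (Fin.cons p.1 (Fin.cons p.2.1 p.2.2)) *
        ∏ t : Fin (k + 2), (if t.val < 2
          then h ((Fin.cons p.1 (Fin.cons p.2.1 p.2.2) : Fin (k + 2) → ι) t)
          else x ((Fin.cons p.1 (Fin.cons p.2.1 p.2.2) : Fin (k + 2) → ι) t)) := by
    intro p
    rw [Fin.prod_univ_succ, Fin.prod_univ_succ]
    simp only [Fin.cons_zero, Fin.cons_succ, Fin.val_succ, Fin.val_zero]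
    norm_num
    ring
  calc sTerm (k + 2) A x h 2
      = ∑ p : ι × ι × (Fin k → ι),
          h p.1 * (h p.2.1 * (A (Fin.cons p.1 (Fin.cons p.2.1 p.2.2)) * ∏ t, x (p.2.2 t))) := by
        refine (Fintype.sum_equiv
          ((Equiv.prodCongr (Equiv.refl ι) (Fin.consEquiv (fun _ : Fin (k+1) => ι))).trans
            (Fin.consEquiv (fun _ : Fin (k+2) => ι))) _ _ ?_).symm
        intro p
        exact hpt p
    _ = ∑ a : ι, ∑ b : ι, ∑ j : Fin k → ι,
          h a * (h b * (A (Fin.cons a (Fin.cons b j)) * ∏ t, x (j t))) := by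
        rw [Fintype.sum_prod_type]
        exact Finset.sum_congr rfl fun a _ => by rw [Fintype.sum_prod_type]
    _ = h ⬝ᵥ (tMat A x).mulVec h := by
        unfold tMat Matrix.mulVec dotProduct
        simp only [Matrix.of_apply, Finset.mul_sum, Finset.sum_mul]
        refine Finset.sum_congr rfl fun a _ => Finset.sum_congr rfl fun b _ =>
          Finset.sum_congr rfl fun j _ => by ring

lemma coord_le_norm (h : EuclideanSpace ℝ ι) (a : ι) : |h a| ≤ ‖h‖ := by
  have h1 : |h a| ^ 2 ≤ ∑ i, ‖h i‖ ^ 2 := by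
    rw [← Real.norm_eq_abs]
    exact Finset.single_le_sum (fun i _ => sq_nonneg ‖h i‖) (Finset.mem_univ a)
  calc |h a| = Real.sqrt (|h a| ^ 2) := (Real.sqrt_sq (abs_nonneg _)).symm
    _ ≤ Real.sqrt (∑ i, ‖h i‖ ^ 2) := Real.sqrt_le_sqrt h1
    _ = ‖h‖ := (EuclideanSpace.norm_eq h).symm

lemma sTerm_bound {k : ℕ} (A : Tensor k ι) (x h : ι → ℝ) (C r : ℝ)
    (hC : ∀ a, |x a| ≤ C) (hC1 : 1 ≤ C) (hh : ∀ a, |h a| ≤ r) (hr1 : r ≤ 1) (hr0 : 0 ≤ r)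
    (d s : ℕ) (hds : d ≤ s) (hsk : s ≤ k) :
    |sTerm k A x h s| ≤ (∑ j : Fin k → ι, |A j|) * (r ^ d * C ^ k) := by
  have hC0 : (0:ℝ) ≤ C := le_trans zero_le_one hC1
  refine le_trans (Finset.abs_sum_le_sum_abs _ _) ?_
  rw [Finset.sum_mul]
  refine Finset.sum_le_sum fun j _ => ?_
  rw [abs_mul, abs_prod]
  refine mul_le_mul_of_nonneg_left ?_ (abs_nonneg (A j))
  have step : (∏ t : Fin k, |if t.val < s then h (j t) else x (j t)|) ≤
      ∏ t : Fin k, (if t.val < d then r else C) := by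
    refine Finset.prod_le_prod (fun t _ => abs_nonneg _) fun t _ => ?_
    by_cases htd : t.val < d
    · rw [if_pos htd, if_pos (htd.trans_le hds)]; exact hh _
    · rw [if_neg htd]
      by_cases hts : t.val < s
      · rw [if_pos hts]; exact (hh _).trans (hr1.trans hC1)
      · rw [if_neg hts]; exact hC _
  refine step.trans ?_
  rw [Finset.prod_ite (fun _ => r) (fun _ => C), Finset.prod_const, Finset.prod_const,
    card_filter_val_lt k d (hds.trans hsk)]
  refine mul_le_mul_of_nonneg_left ?_ (pow_nonneg hr0 d)
  exact pow_le_pow_right₀ hC1 (le_trans (Finset.card_le_univ _) (by simp))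


variable [DecidableEq ι]

lemma posdef_exists_bound (M : Matrix ι ι ℝ) (hM : M.PosDef) :
    ∃ c > 0, ∀ h : EuclideanSpace ℝ ι, c * ‖h‖ ^ 2 ≤ h ⬝ᵥ M.mulVec h := by
  classical
  have hpos : ∀ v : ι → ℝ, v ≠ 0 → 0 < v ⬝ᵥ M.mulVec v := by
    intro v hv
    have := hM.dotProduct_mulVec_pos hv
    simpa using this
  have hscale : ∀ (c : ℝ) (v : ι → ℝ), ((c • v) ⬝ᵥ (M.mulVec (c • v))) = c ^ 2 * (v ⬝ᵥ M.mulVec v) := by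
    intro c v
    rw [Matrix.mulVec_smul, dotProduct_smul, smul_dotProduct]
    simp [smul_eq_mul]; ring
  have hcont : Continuous (fun h : EuclideanSpace ℝ ι => h ⬝ᵥ M.mulVec h) := by
    unfold dotProduct Matrix.mulVec
    refine continuous_finset_sum _ fun a _ => ?_
    exact ((EuclideanSpace.proj a).continuous).mul
      (continuous_finset_sum _ fun b _ => continuous_const.mul (EuclideanSpace.proj b).continuous)
  rcases isEmpty_or_nonempty ι with hι | hι
  · refine ⟨1, one_pos, fun h => ?_⟩
    have : h = 0 := Subsingleton.elim _ _
    simp [this]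
  · obtain ⟨a⟩ := hι
    have hs : (Metric.sphere (0 : EuclideanSpace ℝ ι) 1).Nonempty := by
      refine ⟨EuclideanSpace.single a 1, ?_⟩
      simp [EuclideanSpace.norm_single]
    obtain ⟨z, hz, hmin⟩ := (isCompact_sphere (0 : EuclideanSpace ℝ ι) 1).exists_isMinOn hs
      hcont.continuousOn
    have hz1 : ‖z‖ = 1 := by simpa using hz
    have hz0 : (z : ι → ℝ) ≠ 0 := by
      intro hc
      rw [show z = 0 from by simpa using hc] at hz1
      simp at hz1
    refine ⟨z ⬝ᵥ M.mulVec z, hpos z hz0, fun h => ?_⟩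
    by_cases hh : h = 0
    · simp [hh]
    · have hnorm : ‖h‖ ≠ 0 := norm_ne_zero_iff.2 hh
      have hu : (‖h‖⁻¹ • h) ∈ Metric.sphere (0 : EuclideanSpace ℝ ι) 1 := by
        simp [norm_smul, abs_of_nonneg (inv_nonneg.2 (norm_nonneg h)), inv_mul_cancel₀ hnorm]
      have hval : z ⬝ᵥ M.mulVec z ≤ ‖h‖⁻¹ ^ 2 * (h ⬝ᵥ M.mulVec h) := by
        have h3 : (((‖h‖⁻¹ • h : EuclideanSpace ℝ ι) : ι → ℝ) ⬝ᵥ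
            (M.mulVec ((‖h‖⁻¹ • h : EuclideanSpace ℝ ι) : ι → ℝ))) =
            ‖h‖⁻¹ ^ 2 * (h ⬝ᵥ M.mulVec h) := hscale ‖h‖⁻¹ h
        exact le_of_le_of_eq (by simpa using hmin hu) h3
      have hn2 : (0:ℝ) < ‖h‖ ^ 2 := by positivity
      have hinv : ‖h‖⁻¹ ^ 2 * ‖h‖ ^ 2 = 1 := by
        field_simp
      calc (z ⬝ᵥ M.mulVec z) * ‖h‖ ^ 2
          ≤ (‖h‖⁻¹ ^ 2 * (h ⬝ᵥ M.mulVec h)) * ‖h‖ ^ 2 :=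
            mul_le_mul_of_nonneg_right hval hn2.le
        _ = (‖h‖⁻¹ ^ 2 * ‖h‖ ^ 2) * (h ⬝ᵥ M.mulVec h) := by ring
        _ = h ⬝ᵥ M.mulVec h := by rw [hinv, one_mul]

lemma isLittleO_of_le_sq {E : Type*} [NormedAddCommGroup E] (g : E → ℝ) (C : ℝ)
    (hg : ∀ h : E, ‖h‖ ≤ 1 → |g h| ≤ C * ‖h‖ ^ 2) :
    (fun h => g h) =o[nhds (0 : E)] (fun h : E => h) := by
  rw [Asymptotics.isLittleO_iff]
  intro c hc
  set D : ℝ := max C 0 + 1 with hD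
  have hC : (0:ℝ) < D := by positivity
  have hball : Metric.ball (0 : E) (min 1 (c / D)) ∈ nhds (0 : E) :=
    Metric.ball_mem_nhds _ (lt_min one_pos (by positivity))
  filter_upwards [hball] with h hh
  rw [Metric.mem_ball, dist_zero_right] at hh
  have h1 : ‖h‖ ≤ 1 := le_of_lt (lt_of_lt_of_le hh (min_le_left _ _))
  have h2 : ‖h‖ ≤ c / D := le_of_lt (lt_of_lt_of_le hh (min_le_right _ _))
  have hgh : |g h| ≤ C * ‖h‖ ^ 2 := hg h h1
  rw [Real.norm_eq_abs]
  have hCD : C ≤ D := le_trans (le_max_left C 0) (by simp [hD])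
  calc |g h| ≤ C * ‖h‖ ^ 2 := hgh
    _ ≤ D * (‖h‖ * ‖h‖) := by nlinarith [norm_nonneg h, sq_nonneg ‖h‖]
    _ ≤ D * ((c / D) * ‖h‖) := by
        refine mul_le_mul_of_nonneg_left ?_ (le_of_lt hC)
        exact mul_le_mul_of_nonneg_right h2 (norm_nonneg h)
    _ = c * ‖h‖ := by field_simp
  
lemma sympJ_mul_self (n : ℕ) : sympJ n * sympJ n = -1 := by
  unfold sympJ
  rw [Matrix.fromBlocks_multiply]
  simp [Matrix.fromBlocks_neg, ← Matrix.fromBlocks_one]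

lemma sympJ_mulVec_eq_zero {n : ℕ} {v : Fin n ⊕ Fin n → ℝ} (h : (sympJ n).mulVec v = 0) :
    v = 0 := by
  have := congrArg (fun w => (sympJ n).mulVec w) h
  simp only [Matrix.mulVec_mulVec, sympJ_mul_self, Matrix.mulVec_zero] at this
  rw [Matrix.neg_mulVec, Matrix.one_mulVec] at this
  simpa [neg_eq_zero] using this

lemma dot_sympJ_self (n : ℕ) (v : Fin n ⊕ Fin n → ℝ) : v ⬝ᵥ (sympJ n).mulVec v = 0 := by
  have hskew : (sympJ n)ᵀ = -sympJ n := by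
    unfold sympJ
    rw [Matrix.fromBlocks_transpose]
    simp [Matrix.fromBlocks_neg]
  have h1 : v ⬝ᵥ (sympJ n).mulVec v = ((sympJ n)ᵀ.mulVec v) ⬝ᵥ v := by
    rw [Matrix.dotProduct_mulVec, Matrix.mulVec_transpose]
  have h2 : ((sympJ n)ᵀ.mulVec v) ⬝ᵥ v = -(v ⬝ᵥ (sympJ n).mulVec v) := by
    rw [hskew, Matrix.neg_mulVec, neg_dotProduct, dotProduct_comm]
  linarith [h1, h2]


end Helpers


section Deriv

variable {ι : Type} [Fintype ι] [DecidableEq ι]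

/-- The candidate Fréchet derivative of `w ↦ ∑ i, tPow (B i) w` at `y`. -/
noncomputable def Lmap (m : ℕ) (B : ∀ i : ℕ, Tensor (i + 2) ι) (y : ι → ℝ) :
    EuclideanSpace ℝ ι →L[ℝ] ℝ :=
  ∑ i ∈ Finset.range (m + 1), (((i + 2 : ℕ) : ℝ)) •
    ∑ j : Fin (i + 2) → ι,
      (B i j * ∏ t : Fin (i + 1), y (j t.succ)) • EuclideanSpace.proj (j 0)

lemma Lmap_apply (m : ℕ) (B : ∀ i : ℕ, Tensor (i + 2) ι) (y : ι → ℝ)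
    (h : EuclideanSpace ℝ ι) :
    Lmap m B y h = ∑ i ∈ Finset.range (m + 1),
      ((i + 2 : ℕ) : ℝ) * sTerm (i + 2) (B i) y h 1 := by
  unfold Lmap
  rw [ContinuousLinearMap.sum_apply]
  refine Finset.sum_congr rfl fun i _ => ?_
  rw [ContinuousLinearMap.smul_apply, ContinuousLinearMap.sum_apply, sTerm_one]
  simp [smul_eq_mul]

lemma expansion2 {i : ℕ} (A : Tensor (i + 2) ι) (hA : IsSupersymmetric A) (y h : ι → ℝ) :
    tPow A (fun a => y a + h a) = tPow A y + ((i + 2 : ℕ) : ℝ) * sTerm (i + 2) A y h 1 +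
      ∑ s ∈ Finset.range (i + 1), (((i + 2).choose (s + 2) : ℕ) : ℝ) * sTerm (i + 2) A y h (s + 2) := by
  rw [tPow_add A hA y h]
  rw [show i + 2 + 1 = (i + 2) + 1 from rfl]
  rw [Finset.sum_range_succ' _ (i + 2), Finset.sum_range_succ' _ (i + 1)]
  rw [sTerm_zero]
  simp only [Nat.choose_zero_right, Nat.cast_one, one_mul, Nat.choose_one_right,
    show ∀ x : ℕ, x + 1 + 1 = x + 2 from fun x => rfl,
    show (2 + i : ℕ) = i + 2 from by omega, show (1 + i : ℕ) = i + 1 from by omega]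
  simp only [Nat.zero_add, zero_add, Nat.choose_one_right,
    show (2 + i : ℕ) = i + 2 from by omega, show (1 + i : ℕ) = i + 1 from by omega]
  ring

lemma expansion3 {i : ℕ} (A : Tensor (i + 2) ι) (hA : IsSupersymmetric A) (y h : ι → ℝ) :
    tPow A (fun a => y a + h a) = tPow A y + ((i + 2 : ℕ) : ℝ) * sTerm (i + 2) A y h 1 +
      (((i + 2).choose 2 : ℕ) : ℝ) * sTerm (i + 2) A y h 2 +
      ∑ s ∈ Finset.range i, (((i + 2).choose (s + 3) : ℕ) : ℝ) * sTerm (i + 2) A y h (s + 3) := by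
  rw [expansion2 A hA y h, Finset.sum_range_succ' _ i]
  ring

lemma hasFDerivAt_Htot (m : ℕ) (B : ∀ i : ℕ, Tensor (i + 2) ι)
    (hB : ∀ i ≤ m, IsSupersymmetric (B i)) (y : EuclideanSpace ℝ ι) :
    HasFDerivAt (fun w : EuclideanSpace ℝ ι => ∑ i ∈ Finset.range (m + 1), tPow (B i) w)
      (Lmap m B y) y := by
  rw [hasFDerivAt_iff_isLittleO_nhds_zero]
  set C : ℝ := 1 + ∑ a, |y a| with hCdef
  have hC1 : 1 ≤ C := by
    have : (0:ℝ) ≤ ∑ a, |y a| := Finset.sum_nonneg fun a _ => abs_nonneg _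
    simp [hCdef]; linarith
  have hCa : ∀ a, |y a| ≤ C := by
    intro a
    have : |y a| ≤ ∑ a, |y a| :=
      Finset.single_le_sum (fun a _ => abs_nonneg (y a)) (Finset.mem_univ a)
    simp [hCdef]; linarith
  set K : ℝ := ∑ i ∈ Finset.range (m + 1), ∑ s ∈ Finset.range (i + 1),
    (((i + 2).choose (s + 2) : ℕ) : ℝ) *
      ((∑ j : Fin (i + 2) → ι, |B i j|) * C ^ (i + 2)) with hKdef
  apply isLittleO_of_le_sq _ K
  intro h hh1
  have hcoord : ∀ a, |h a| ≤ ‖h‖ := fun a => coord_le_norm h a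
  have hexp : ∀ i ∈ Finset.range (m + 1),
      tPow (B i) ((y + h : EuclideanSpace ℝ ι)) = tPow (B i) y + ((i + 2 : ℕ) : ℝ) * sTerm (i + 2) (B i) y h 1 +
        ∑ s ∈ Finset.range (i + 1),
          (((i + 2).choose (s + 2) : ℕ) : ℝ) * sTerm (i + 2) (B i) y h (s + 2) := by
    intro i hi
    have : tPow (B i) ((y + h : EuclideanSpace ℝ ι)) = tPow (B i) (fun a => y a + h a) := rfl
    rw [this, expansion2 (B i) (hB i (Nat.lt_succ_iff.1 (Finset.mem_range.1 hi))) y h]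
  have hsum : (∑ i ∈ Finset.range (m + 1), tPow (B i) ((y + h : EuclideanSpace ℝ ι))) -
      (∑ i ∈ Finset.range (m + 1), tPow (B i) y) - Lmap m B y h =
      ∑ i ∈ Finset.range (m + 1), ∑ s ∈ Finset.range (i + 1),
        (((i + 2).choose (s + 2) : ℕ) : ℝ) * sTerm (i + 2) (B i) y h (s + 2) := by
    rw [Lmap_apply, Finset.sum_congr rfl hexp]
    rw [← Finset.sum_sub_distrib, ← Finset.sum_sub_distrib]
    refine Finset.sum_congr rfl fun i _ => by ring
  simp only [hsum]
  rw [show K * ‖h‖ ^ 2 = ∑ i ∈ Finset.range (m + 1), ∑ s ∈ Finset.range (i + 1),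
      (((i + 2).choose (s + 2) : ℕ) : ℝ) *
        ((∑ j : Fin (i + 2) → ι, |B i j|) * (‖h‖ ^ 2 * C ^ (i + 2))) by
    rw [hKdef, Finset.sum_mul]
    exact Finset.sum_congr rfl fun i _ => by
      rw [Finset.sum_mul]; exact Finset.sum_congr rfl fun s _ => by ring]
  refine le_trans (Finset.abs_sum_le_sum_abs _ _) (Finset.sum_le_sum fun i _ => ?_)
  refine le_trans (Finset.abs_sum_le_sum_abs _ _) (Finset.sum_le_sum fun s hs => ?_)
  rw [abs_mul, abs_of_nonneg (by positivity : (0:ℝ) ≤ (((i + 2).choose (s + 2) : ℕ) : ℝ))]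
  refine mul_le_mul_of_nonneg_left ?_ (by positivity)
  exact sTerm_bound (B i) y h C ‖h‖ hCa hC1 hcoord hh1 (norm_nonneg h) 2 (s + 2)
    (by omega) (by have := Finset.mem_range.1 hs; omega)

end Deriv


section MoreAux

variable {ι : Type} [Fintype ι] [DecidableEq ι]

lemma dotProduct_sum_smul_mulVec (f : Finset ℕ) (c : ℕ → ℝ) (Ms : ℕ → Matrix ι ι ℝ)
    (v : ι → ℝ) :
    v ⬝ᵥ (∑ i ∈ f, c i • Ms i).mulVec v = ∑ i ∈ f, c i * (v ⬝ᵥ (Ms i).mulVec v) := by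
  classical
  induction f using Finset.induction with
  | empty => simp
  | insert _ _ hnot ih =>
      rw [Finset.sum_insert hnot, Finset.sum_insert hnot, Matrix.add_mulVec,
        dotProduct_add, Matrix.smul_mulVec, dotProduct_smul, ih]
      simp [smul_eq_mul]

lemma choose_two_cast (i : ℕ) :
    (((i + 2).choose 2 : ℕ) : ℝ) = (((i + 2) * (i + 1) : ℕ) : ℝ) / 2 := by
  have h2 : (i + 2).choose 2 * 2 = (i + 2) * (i + 1) := by
    rw [Nat.choose_two_right]
    rw [show (i + 2) - 1 = i + 1 from rfl]
    refine Nat.div_mul_cancel (even_iff_two_dvd.1 ?_)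
    have := Nat.even_mul_succ_self (i + 1)
    rwa [show (i + 1) * (i + 1 + 1) = (i + 2) * (i + 1) from by ring] at this
  have := congrArg (fun x : ℕ => (x : ℝ)) h2
  push_cast at this ⊢
  linarith

end MoreAux


lemma quad_lower (Δ q c0 CC nh : ℝ) (h1 : -(CC * nh ^ 3) ≤ Δ - (1/2) * q)
    (h2 : c0 * nh ^ 2 ≤ q) (h4 : CC * nh ^ 3 ≤ (c0/4) * nh ^ 2) :
    (c0/4) * nh ^ 2 ≤ 1 * Δ := by nlinarith

lemma quad_lower_neg (Δ q c0 CC nh : ℝ) (h1 : Δ - (1/2) * q ≤ CC * nh ^ 3)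
    (h2 : c0 * nh ^ 2 ≤ -q) (h4 : CC * nh ^ 3 ≤ (c0/4) * nh ^ 2) :
    (c0/4) * nh ^ 2 ≤ (-1) * Δ := by nlinarith


lemma mul_div_bound (CC c0 : ℝ) (hCC0 : 0 ≤ CC) (hc0 : 0 < c0) :
    CC * (c0/(4*(CC+1))) ≤ c0/4 := by
  rw [← mul_div_assoc, div_le_div_iff₀ (by positivity) (by norm_num)]
  nlinarith

set_option maxHeartbeats 1000000

/-- for the tensor-based polynomial Hamiltonian system `ẋ = J ∇H(x)` with
`H(x) = ∑_{i=0}^{m} B_i x^{i+2}` (the `B_i` supersymmetric of order `i + 2`, dimension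
`2n`), if `x*` is an equilibrium and the symmetric matrix
`∑_{i=0}^{m} (i+2)(i+1) B_i (x*)^i` is positive definite or negative definite, then `x*`
is a Lyapunov stable equilibrium. -/
theorem equilibrium_stable_of_hessian_definite (n m : ℕ)
    (B : (i : ℕ) → Tensor (i + 2) (Fin n ⊕ Fin n))
    (hB : ∀ i ≤ m, IsSupersymmetric (B i))
    (xstar : EuclideanSpace ℝ (Fin n ⊕ Fin n))
    (heq : (sympJ n).mulVec
        (gradient (fun w : EuclideanSpace ℝ (Fin n ⊕ Fin n) =>
            ∑ i ∈ Finset.range (m + 1), tPow (B i) w) xstar :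
          EuclideanSpace ℝ (Fin n ⊕ Fin n)) = 0)
    (hhess :
      (∑ i ∈ Finset.range (m + 1),
          ((((i + 2) * (i + 1) : ℕ) : ℝ)) • tMat (B i) xstar).PosDef ∨
      (-(∑ i ∈ Finset.range (m + 1),
          ((((i + 2) * (i + 1) : ℕ) : ℝ)) • tMat (B i) xstar)).PosDef) :
    ∀ ε > 0, ∃ δ > 0, ∀ x : ℝ → EuclideanSpace ℝ (Fin n ⊕ Fin n),
      (∀ t : ℝ, 0 ≤ t → HasDerivWithinAt x
          (WithLp.toLp 2 ((sympJ n).mulVec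
              (gradient (fun w : EuclideanSpace ℝ (Fin n ⊕ Fin n) =>
                  ∑ i ∈ Finset.range (m + 1), tPow (B i) w) (x t) :
                EuclideanSpace ℝ (Fin n ⊕ Fin n))) :
            EuclideanSpace ℝ (Fin n ⊕ Fin n))
          (Set.Ici 0) t) →
      ‖x 0 - xstar‖ < δ → ∀ t : ℝ, 0 ≤ t → ‖x t - xstar‖ < ε := by
  classical
  set Htot : EuclideanSpace ℝ (Fin n ⊕ Fin n) → ℝ := fun w => ∑ i ∈ Finset.range (m + 1), tPow (B i) w with hHtotdef
  set M : Matrix (Fin n ⊕ Fin n) (Fin n ⊕ Fin n) ℝ :=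
    ∑ i ∈ Finset.range (m + 1), ((((i + 2) * (i + 1) : ℕ) : ℝ)) • tMat (B i) xstar with hMdef
  -- derivative of Htot everywhere
  have hders : ∀ y : EuclideanSpace ℝ (Fin n ⊕ Fin n), HasFDerivAt Htot (Lmap m B y) y := fun y => hasFDerivAt_Htot m B hB y
  have hgrad_eq : ∀ y : EuclideanSpace ℝ (Fin n ⊕ Fin n), gradient Htot y = (InnerProductSpace.toDual ℝ (EuclideanSpace ℝ (Fin n ⊕ Fin n))).symm (Lmap m B y) :=
    fun y => (hasFDerivAt_iff_hasGradientAt.1 (hders y)).gradient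
  have hdiff : Differentiable ℝ Htot := fun y => (hders y).differentiableAt
  have hHcont : Continuous Htot := hdiff.continuous
  -- the linear term applied to the vector field vanishes
  have hfderiv_dir : ∀ y : EuclideanSpace ℝ (Fin n ⊕ Fin n),
      Lmap m B y (WithLp.toLp 2 ((sympJ n).mulVec (gradient Htot y : EuclideanSpace ℝ (Fin n ⊕ Fin n))) : EuclideanSpace ℝ (Fin n ⊕ Fin n)) = 0 := by
    intro y
    have h2 : Lmap m B y (WithLp.toLp 2 ((sympJ n).mulVec (gradient Htot y : EuclideanSpace ℝ (Fin n ⊕ Fin n))) : EuclideanSpace ℝ (Fin n ⊕ Fin n)) =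
        (inner ℝ (gradient Htot y) (WithLp.toLp 2 ((sympJ n).mulVec (gradient Htot y : EuclideanSpace ℝ (Fin n ⊕ Fin n))) : EuclideanSpace ℝ (Fin n ⊕ Fin n)) : ℝ) := by
      rw [hgrad_eq y]
      exact (InnerProductSpace.toDual_symm_apply).symm
    rw [h2, PiLp.inner_apply]
    simp only [RCLike.inner_apply', conj_trivial, PiLp.toLp_apply]
    exact dot_sympJ_self n (gradient Htot y : EuclideanSpace ℝ (Fin n ⊕ Fin n))
  -- conservation of energy
  have hconserve : ∀ x : ℝ → EuclideanSpace ℝ (Fin n ⊕ Fin n),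
      (∀ t : ℝ, 0 ≤ t → HasDerivWithinAt x
        (WithLp.toLp 2 ((sympJ n).mulVec (gradient Htot (x t) : EuclideanSpace ℝ (Fin n ⊕ Fin n))) : EuclideanSpace ℝ (Fin n ⊕ Fin n)) (Set.Ici 0) t) →
      ∀ t : ℝ, 0 ≤ t → Htot (x t) = Htot (x 0) := by
    intro x hx t ht
    have hcx : ContinuousOn x (Set.Icc 0 t) := fun u hu =>
      ((hx u hu.1).continuousWithinAt).mono (fun v hv => hv.1)
    have hcont : ContinuousOn (fun u => Htot (x u)) (Set.Icc 0 t) :=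
      hHcont.comp_continuousOn hcx
    have hderiv0 : ∀ u ∈ Set.Ico 0 t, HasDerivWithinAt (fun u => Htot (x u)) 0 (Set.Ici u) u := by
      intro u hu
      have hxu : HasDerivWithinAt x (WithLp.toLp 2 ((sympJ n).mulVec (gradient Htot (x u) : EuclideanSpace ℝ (Fin n ⊕ Fin n))) : EuclideanSpace ℝ (Fin n ⊕ Fin n))
          (Set.Ici u) u := (hx u hu.1).mono (Set.Ici_subset_Ici.2 hu.1)
      have hcomp := (hders (x u)).comp_hasDerivWithinAt u hxu
      rwa [hfderiv_dir (x u)] at hcomp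
    exact constant_of_has_deriv_right_zero hcont hderiv0 t (Set.right_mem_Icc.2 ht)
  -- gradient vanishes at xstar, hence so does the linear form there
  have hg0 : gradient Htot xstar = 0 := by simpa using sympJ_mulVec_eq_zero heq
  have hL0 : Lmap m B xstar = 0 := by
    have h1 : (InnerProductSpace.toDual ℝ (EuclideanSpace ℝ (Fin n ⊕ Fin n))).symm (Lmap m B xstar) = 0 := by
      rw [← hgrad_eq xstar]; exact hg0
    have h2 := congrArg (InnerProductSpace.toDual ℝ (EuclideanSpace ℝ (Fin n ⊕ Fin n))) h1
    simpa using h2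
  -- cubic-error quadratic expansion at xstar
  have hQ : ∃ CC : ℝ, 0 ≤ CC ∧ ∀ h : EuclideanSpace ℝ (Fin n ⊕ Fin n), ‖h‖ ≤ 1 →
      |Htot (xstar + h) - Htot xstar - (1/2) * (h ⬝ᵥ M.mulVec h)| ≤ CC * ‖h‖ ^ 3 := by
    set C : ℝ := 1 + ∑ a, |xstar a| with hCdef
    have hC1 : 1 ≤ C := by
      have : (0:ℝ) ≤ ∑ a, |xstar a| := Finset.sum_nonneg fun a _ => abs_nonneg _
      simp only [hCdef]; linarith
    have hCa : ∀ a, |xstar a| ≤ C := by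
      intro a
      have : |xstar a| ≤ ∑ a, |xstar a| :=
        Finset.single_le_sum (fun a _ => abs_nonneg (xstar a)) (Finset.mem_univ a)
      simp only [hCdef]; linarith
    refine ⟨∑ i ∈ Finset.range (m + 1), ∑ s ∈ Finset.range i,
      (((i + 2).choose (s + 3) : ℕ) : ℝ) *
        ((∑ j : Fin (i + 2) → (Fin n ⊕ Fin n), |B i j|) * C ^ (i + 2)),
      by positivity, ?_⟩
    intro h hh1
    have hcoord : ∀ a, |h a| ≤ ‖h‖ := fun a => coord_le_norm h a
    -- the exact identity
    have hquad : ∑ i ∈ Finset.range (m + 1),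
        (((i + 2).choose 2 : ℕ) : ℝ) * sTerm (i + 2) (B i) xstar h 2 =
        (1/2) * (h ⬝ᵥ M.mulVec h) := by
      rw [hMdef, dotProduct_sum_smul_mulVec]
      rw [Finset.mul_sum]
      refine Finset.sum_congr rfl fun i _ => ?_
      rw [sTerm_two (B i) xstar h, choose_two_cast i]
      push_cast
      ring
    have hlin : ∑ i ∈ Finset.range (m + 1),
        ((i + 2 : ℕ) : ℝ) * sTerm (i + 2) (B i) xstar h 1 = 0 := by
      rw [← Lmap_apply m B xstar h, hL0]
      simp
    have hid : Htot (xstar + h) - Htot xstar - (1/2) * (h ⬝ᵥ M.mulVec h) =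
        ∑ i ∈ Finset.range (m + 1), ∑ s ∈ Finset.range i,
          (((i + 2).choose (s + 3) : ℕ) : ℝ) * sTerm (i + 2) (B i) xstar h (s + 3) := by
      have hexp : ∀ i ∈ Finset.range (m + 1),
          tPow (B i) ((xstar + h : EuclideanSpace ℝ (Fin n ⊕ Fin n))) = tPow (B i) xstar +
            ((i + 2 : ℕ) : ℝ) * sTerm (i + 2) (B i) xstar h 1 +
            (((i + 2).choose 2 : ℕ) : ℝ) * sTerm (i + 2) (B i) xstar h 2 +
            ∑ s ∈ Finset.range i,
              (((i + 2).choose (s + 3) : ℕ) : ℝ) * sTerm (i + 2) (B i) xstar h (s + 3) := by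
        intro i hi
        have h0 : tPow (B i) ((xstar + h : EuclideanSpace ℝ (Fin n ⊕ Fin n))) = tPow (B i) (fun a => xstar a + h a) := rfl
        rw [h0, expansion3 (B i) (hB i (Nat.lt_succ_iff.1 (Finset.mem_range.1 hi))) xstar h]
      have : Htot (xstar + h) = Htot xstar +
          (∑ i ∈ Finset.range (m + 1), ((i + 2 : ℕ) : ℝ) * sTerm (i + 2) (B i) xstar h 1) +
          (∑ i ∈ Finset.range (m + 1),
            (((i + 2).choose 2 : ℕ) : ℝ) * sTerm (i + 2) (B i) xstar h 2) +
          ∑ i ∈ Finset.range (m + 1), ∑ s ∈ Finset.range i,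
            (((i + 2).choose (s + 3) : ℕ) : ℝ) * sTerm (i + 2) (B i) xstar h (s + 3) := by
        rw [hHtotdef]
        simp only
        rw [Finset.sum_congr rfl hexp, ← Finset.sum_add_distrib, ← Finset.sum_add_distrib,
          ← Finset.sum_add_distrib]
      rw [this, hlin, hquad]
      ring
    rw [hid]
    rw [show (∑ i ∈ Finset.range (m + 1), ∑ s ∈ Finset.range i,
        (((i + 2).choose (s + 3) : ℕ) : ℝ) *
          ((∑ j : Fin (i + 2) → (Fin n ⊕ Fin n), |B i j|) * C ^ (i + 2))) * ‖h‖ ^ 3 =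
        ∑ i ∈ Finset.range (m + 1), ∑ s ∈ Finset.range i,
        (((i + 2).choose (s + 3) : ℕ) : ℝ) *
          ((∑ j : Fin (i + 2) → (Fin n ⊕ Fin n), |B i j|) * (‖h‖ ^ 3 * C ^ (i + 2))) by
      rw [Finset.sum_mul]
      exact Finset.sum_congr rfl fun i _ => by
        rw [Finset.sum_mul]; exact Finset.sum_congr rfl fun s _ => by ring]
    refine le_trans (Finset.abs_sum_le_sum_abs _ _) (Finset.sum_le_sum fun i _ => ?_)
    refine le_trans (Finset.abs_sum_le_sum_abs _ _) (Finset.sum_le_sum fun s hs => ?_)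
    rw [abs_mul, abs_of_nonneg (by positivity : (0:ℝ) ≤ (((i + 2).choose (s + 3) : ℕ) : ℝ))]
    refine mul_le_mul_of_nonneg_left ?_ (by positivity)
    exact sTerm_bound (B i) xstar h C ‖h‖ hCa hC1 hcoord hh1 (norm_nonneg h) 3 (s + 3)
      (by omega) (by have := Finset.mem_range.1 hs; omega)
  obtain ⟨CC, hCC0, hQ⟩ := hQ
  clear_value Htot M
  -- a definite sign: uniform quadratic growth of ±(Htot - Htot xstar) near xstar
  have key : ∃ sg c r₀ : ℝ, 0 < c ∧ 0 < r₀ ∧ r₀ ≤ 1 ∧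
      ∀ h : EuclideanSpace ℝ (Fin n ⊕ Fin n), ‖h‖ ≤ r₀ → c * ‖h‖ ^ 2 ≤ sg * (Htot (xstar + h) - Htot xstar) := by
    have hcube : ∀ h : EuclideanSpace ℝ (Fin n ⊕ Fin n), ‖h‖ ^ 3 = ‖h‖ * ‖h‖ ^ 2 := fun h => by ring
    rcases hhess with hpd | hpd
    · obtain ⟨c0, hc0, hbd⟩ := posdef_exists_bound M hpd
      refine ⟨1, c0/4, min 1 (c0/(4*(CC+1))), by positivity, by positivity, min_le_left _ _, ?_⟩
      intro h hh
      have hh1 : ‖h‖ ≤ 1 := le_trans hh (min_le_left _ _)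
      have hh2 : ‖h‖ ≤ c0/(4*(CC+1)) := le_trans hh (min_le_right _ _)
      have h1 := (abs_le.1 (hQ h hh1)).1
      have h2 := hbd h
      have h3 : CC * ‖h‖ ≤ c0/4 :=
        (mul_le_mul_of_nonneg_left hh2 hCC0).trans (mul_div_bound CC c0 hCC0 hc0)
      have h4 : CC * ‖h‖ ^ 3 ≤ (c0/4) * ‖h‖ ^ 2 := by
        rw [hcube h, ← mul_assoc]
        exact mul_le_mul_of_nonneg_right h3 (sq_nonneg _)
      exact quad_lower _ _ _ _ _ h1 h2 h4
    · obtain ⟨c0, hc0, hbd⟩ := posdef_exists_bound (-M) hpd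
      refine ⟨-1, c0/4, min 1 (c0/(4*(CC+1))), by positivity, by positivity, min_le_left _ _, ?_⟩
      intro h hh
      have hh1 : ‖h‖ ≤ 1 := le_trans hh (min_le_left _ _)
      have hh2 : ‖h‖ ≤ c0/(4*(CC+1)) := le_trans hh (min_le_right _ _)
      have h1 := (abs_le.1 (hQ h hh1)).2
      have h2 := hbd h
      rw [Matrix.neg_mulVec, dotProduct_neg] at h2
      have h3 : CC * ‖h‖ ≤ c0/4 :=
        (mul_le_mul_of_nonneg_left hh2 hCC0).trans (mul_div_bound CC c0 hCC0 hc0)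
      have h4 : CC * ‖h‖ ^ 3 ≤ (c0/4) * ‖h‖ ^ 2 := by
        rw [hcube h, ← mul_assoc]
        exact mul_le_mul_of_nonneg_right h3 (sq_nonneg _)
      exact quad_lower_neg _ _ _ _ _ h1 h2 h4
  obtain ⟨sg, c, r₀, hc, hr₀, hr₀1, hkey⟩ := key
  -- Lyapunov argument
  intro ε hε
  set ρ : ℝ := min (ε/2) r₀ with hρdef
  have hρ : 0 < ρ := lt_min (by linarith) hr₀
  set c₀ : ℝ := c * ρ ^ 2 with hc₀def
  have hc₀ : 0 < c₀ := by positivity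
  -- continuity of the Lyapunov function at xstar
  have hΦcont : ContinuousAt (fun y : EuclideanSpace ℝ (Fin n ⊕ Fin n) => sg * (Htot y - Htot xstar)) xstar :=
    (continuous_const.mul (hHcont.sub continuous_const)).continuousAt
  obtain ⟨δ', hδ'pos, hδ'⟩ := Metric.continuousAt_iff.1 hΦcont c₀ hc₀
  refine ⟨min δ' ρ, lt_min hδ'pos hρ, ?_⟩
  intro x hx hx0 t ht
  have hmain : ∀ u : ℝ, 0 ≤ u → ‖x u - xstar‖ < ρ := by
    intro u hu
    by_contra hge
    push_neg at hge
    have hcx : ContinuousOn x (Set.Icc 0 u) := fun v hv =>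
      ((hx v hv.1).continuousWithinAt).mono (fun w hw => hw.1)
    have hg : ContinuousOn (fun v => ‖x v - xstar‖) (Set.Icc 0 u) :=
      (hcx.sub continuousOn_const).norm
    have h0ρ : ‖x 0 - xstar‖ < ρ := lt_of_lt_of_le hx0 (min_le_right δ' ρ)
    obtain ⟨t₁, ht₁mem, ht₁⟩ := intermediate_value_Icc hu hg ⟨h0ρ.le, hge⟩
    have ht₁' : ‖x t₁ - xstar‖ = ρ := ht₁
    have ht₁0 : 0 ≤ t₁ := ht₁mem.1
    have hcons := hconserve x hx t₁ ht₁0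
    have hsphere : c₀ ≤ sg * (Htot (x t₁) - Htot xstar) := by
      have hle : ‖x t₁ - xstar‖ ≤ r₀ := by rw [ht₁']; exact min_le_right _ _
      have := hkey (x t₁ - xstar) hle
      rw [show xstar + (x t₁ - xstar) = x t₁ from by abel] at this
      rw [ht₁'] at this
      exact this
    have hx0' : |sg * (Htot (x 0) - Htot xstar)| < c₀ := by
      have hdist : dist (x 0) xstar < δ' :=
        lt_of_lt_of_le (by rw [dist_eq_norm]; exact hx0) (min_le_left _ _)
      have := hδ' hdist
      rw [Real.dist_eq] at this
      simpa using this
    rw [hcons] at hsphere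
    exact absurd hsphere (not_le.2 (lt_of_le_of_lt (le_abs_self _) hx0'))
  have := hmain t ht
  have hρε : ρ ≤ ε/2 := min_le_left _ _
  linarith
end
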